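/- The delay game Γ_f(L) and the delay-free game Γ(shift_f(L)) are equivalent for Player O: Player O has a winning strategy in the delay game Γ_f(L) if and only if Player O has a winning strategy in the Gale-Stewart game with winning condition shift_f(L). -/

import Mathlib

open scoped Classical MeasureTheory

section DelayGames

variable {I O A B : Type}

/-- `shiftSeq f β = ▷^{f 0 - 1} β 0 ▷^{f 1 - 1} β 1 ⋯`, where the skip symbol `▷`
is modeled by `none` and a letter `b ∈ Σ_O` by `some b`. -/
noncomputable def shiftSeq (f : ℕ → ℕ) (β : ℕ → O) : ℕ → Option O := fun n =>
  if h : ∃ i, (∑ j ∈ Finset.range (i + 1), f j) = n + 1 then some (β (Nat.find h))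
  else none

/-- `shift_f(L) = { (α, shift_f(β)) : (α, β) ∈ L }`. -/
def shiftLang (f : ℕ → ℕ) (L : Set ((ℕ → I) × (ℕ → O))) :
    Set ((ℕ → I) × (ℕ → Option O)) :=
  {p | ∃ β : ℕ → O, (p.1, β) ∈ L ∧ p.2 = shiftSeq f β}

/-- The morphism `h` erasing the skip symbol, applied to an infinite word
(meaningful when the word has infinitely many non-skip letters). -/
noncomputable def eraseSkips [Inhabited O] (β : ℕ → Option O) : ℕ → O := fun n =>
  (β (Nat.nth (fun k => (β k).isSome) n)).getD default

/-- `skip(L) = ⋃_f shift_f(L) = { (α,β) : β has infinitely many non-▷ letters and (α, h β) ∈ L }`. -/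
def skipLang [Inhabited O] (L : Set ((ℕ → I) × (ℕ → O))) :
    Set ((ℕ → I) × (ℕ → Option O)) :=
  {p | {k | (p.2 k).isSome}.Infinite ∧ (p.1, eraseSkips p.2) ∈ L}

/-- A play of a Gale-Stewart game is consistent with the Player O strategy `σ`. -/
def gsConsO (σ : List A → B) (α : ℕ → A) (β : ℕ → B) : Prop :=
  ∀ i, β i = σ (List.ofFn fun j : Fin (i + 1) => α j)

/-- A play of a Gale-Stewart game is consistent with the Player I strategy `τ`. -/
def gsConsI (τ : List B → A) (α : ℕ → A) (β : ℕ → B) : Prop :=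
  ∀ i, α i = τ (List.ofFn fun j : Fin i => β j)

/-- `σ` is a winning strategy for Player O in the Gale-Stewart game with winning condition `W`. -/
def gsWinO (W : Set ((ℕ → A) × (ℕ → B))) (σ : List A → B) : Prop :=
  ∀ α β, gsConsO σ α β → (α, β) ∈ W

/-- `τ` is a winning strategy for Player I in the Gale-Stewart game with winning condition `W`. -/
def gsWinI (W : Set ((ℕ → A) × (ℕ → B))) (τ : List B → A) : Prop :=
  ∀ α β, gsConsI τ α β → (α, β) ∉ W

/-- The infinite word `u 0 · u 1 · u 2 ⋯` built by Player I in a delay game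
(well-defined at position `n` as soon as the first `n+1` blocks have more than `n` letters). -/
def outcomeI [Inhabited I] (u : ℕ → List I) : ℕ → I := fun n =>
  ((List.ofFn fun j : Fin (n + 1) => u j).flatten).getD n default

/-- The word `v 0 ⋯ v (i-1)` of the first `i` letters of `v`. -/
def prefixW (v : ℕ → O) (i : ℕ) : List O := List.ofFn fun j : Fin i => v j

/-- The concatenation `u 0 · u 1 ⋯ u i` of Player I's moves up to round `i`. -/
def inputsUpTo (u : ℕ → List I) (i : ℕ) : List I :=
  (List.ofFn fun j : Fin (i + 1) => u j).flatten

/-- `τ : Σ_O^* → Σ_I^*` is a (syntactically valid) Player I strategy for the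
delay game `Γ_f(L)`: it answers with `f i` letters in round `i`. -/
def delayStratI (f : ℕ → ℕ) (τ : List O → List I) : Prop :=
  ∀ w : List O, (τ w).length = f w.length

/-- `τ` is winning for Player I in the delay game `Γ_f(L)`. -/
def delayWinI [Inhabited I] (f : ℕ → ℕ) (L : Set ((ℕ → I) × (ℕ → O)))
    (τ : List O → List I) : Prop :=
  ∀ (u : ℕ → List I) (v : ℕ → O), (∀ i, (u i).length = f i) →
    (∀ i, u i = τ (prefixW v i)) → (outcomeI u, v) ∉ L

/-- `σ : Σ_I^* → Σ_O` is winning for Player O in the delay game `Γ_f(L)`. -/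
def delayWinO [Inhabited I] (f : ℕ → ℕ) (L : Set ((ℕ → I) × (ℕ → O)))
    (σ : List I → O) : Prop :=
  ∀ (u : ℕ → List I) (v : ℕ → O), (∀ i, (u i).length = f i) →
    (∀ i, v i = σ (inputsUpTo u i)) → (outcomeI u, v) ∈ L

/-- A round-counting strategy `σ : Σ_I^* × ℕ → Σ_O` is winning for Player O in `Γ_f(L)`:
in round `i` Player O plays `σ (u 0 ⋯ u i) i`. -/
def rcWinO [Inhabited I] (f : ℕ → ℕ) (L : Set ((ℕ → I) × (ℕ → O)))
    (σ : List I → ℕ → O) : Prop :=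
  ∀ (u : ℕ → List I) (v : ℕ → O), (∀ i, (u i).length = f i) →
    (∀ i, v i = σ (inputsUpTo u i) i) → (outcomeI u, v) ∈ L

/-- An output-tracking strategy `τ : Σ_O^* → Σ_I^ω` is winning for Player I in `Γ_f(L)`:
in round `i` Player I plays the length-`f i` prefix of `τ (v 0 ⋯ v (i-1))`. -/
def otWinI [Inhabited I] (f : ℕ → ℕ) (L : Set ((ℕ → I) × (ℕ → O)))
    (τ : List O → ℕ → I) : Prop :=
  ∀ (u : ℕ → List I) (v : ℕ → O),
    (∀ i, u i = List.ofFn fun j : Fin (f i) => τ (prefixW v i) j) →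
    (outcomeI u, v) ∉ L

/-- A lookahead-counting strategy `τ : Σ_O^* × ℕ → Σ_I^ω` is winning for Player I in `Γ_f(L)`:
in round `i` Player I plays the length-`f i` prefix of `τ (v 0 ⋯ v (i-1), Σ_{j<i} f j)`. -/
def lcWinI [Inhabited I] (f : ℕ → ℕ) (L : Set ((ℕ → I) × (ℕ → O)))
    (τ : List O → ℕ → ℕ → I) : Prop :=
  ∀ (u : ℕ → List I) (v : ℕ → O),
    (∀ i, u i = List.ofFn fun j : Fin (f i) =>
      τ (prefixW v i) (∑ k ∈ Finset.range i, f k) j) →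
    (outcomeI u, v) ∉ L

/-- A history-tracking strategy `τ : Σ_O^* × (ℕ_{>0})^* → Σ_I^ω` is winning for Player I
in `Γ_f(L)`: in round `i` Player I plays the length-`f i` prefix of
`τ (v 0 ⋯ v (i-1), f 0 ⋯ f (i-1))`. -/
def htWinI [Inhabited I] (f : ℕ → ℕ) (L : Set ((ℕ → I) × (ℕ → O)))
    (τ : List O → List ℕ → ℕ → I) : Prop :=
  ∀ (u : ℕ → List I) (v : ℕ → O),
    (∀ i, u i = List.ofFn fun j : Fin (f i) => τ (prefixW v i) (prefixW f i) j) →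
    (outcomeI u, v) ∉ L

/-- `f ⊑ f'` : in every round, the lookahead granted by `f'` is at least that granted by `f`. -/
def delayLE (f f' : ℕ → ℕ) : Prop :=
  ∀ i, (∑ j ∈ Finset.range (i + 1), f j) ≤ ∑ j ∈ Finset.range (i + 1), f' j

end DelayGames
section Stmt8Aux

variable {I : Type} [Inhabited I]

private lemma S_strictMono (f : ℕ → ℕ) (hf : ∀ i, 0 < f i) :
    StrictMono (fun i => ∑ j ∈ Finset.range (i + 1), f j) :=
  strictMono_nat_of_lt_succ fun n => by
    simp only [Finset.sum_range_succ]
    exact Nat.lt_add_of_pos_right (hf _)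

private lemma S_ge (f : ℕ → ℕ) (hf : ∀ i, 0 < f i) (i : ℕ) :
    i + 1 ≤ ∑ j ∈ Finset.range (i + 1), f j := by
  calc i + 1 = ∑ _j ∈ Finset.range (i + 1), 1 := by simp
  _ ≤ _ := Finset.sum_le_sum fun j _ => hf j

private lemma inputs_succ (u : ℕ → List I) (i : ℕ) :
    inputsUpTo u (i + 1) = inputsUpTo u i ++ u (i + 1) := by
  unfold inputsUpTo
  rw [List.ofFn_succ' (fun j : Fin (i + 2) => u j)]
  simp [List.concat_eq_append, Fin.last]

private lemma len_inputs (f : ℕ → ℕ) (u : ℕ → List I) (hu : ∀ i, (u i).length = f i) (i : ℕ) :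
    (inputsUpTo u i).length = ∑ j ∈ Finset.range (i + 1), f j := by
  induction i with
  | zero => simp [inputsUpTo, hu]
  | succ i ih =>
    rw [inputs_succ, List.length_append, ih, hu, Finset.sum_range_succ f (i + 1)]

private lemma inputs_prefix (u : ℕ → List I) {i m : ℕ} (h : i ≤ m) :
    inputsUpTo u i <+: inputsUpTo u m := by
  induction m with
  | zero => simp_all
  | succ m ih =>
    rcases Nat.lt_or_ge i (m + 1) with h' | h'
    · exact (ih (Nat.lt_succ_iff.mp h')).trans
        (by rw [inputs_succ]; exact List.prefix_append _ _)
    · have : i = m + 1 := le_antisymm h h'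
      subst this; exact List.prefix_refl _

private lemma outcome_def (u : ℕ → List I) (n : ℕ) :
    outcomeI u n = (inputsUpTo u n).getD n default := rfl

private lemma getElem_inputs (f : ℕ → ℕ) (hf : ∀ i, 0 < f i) (u : ℕ → List I)
    (hu : ∀ i, (u i).length = f i) (i j : ℕ) (hj : j < (inputsUpTo u i).length) :
    (inputsUpTo u i)[j] = outcomeI u j := by
  have hjj : j < (inputsUpTo u j).length := by
    rw [len_inputs f u hu]; exact S_ge f hf j
  have h1 := (inputs_prefix u (le_max_left i j)).getElem hj
  have h2 := (inputs_prefix u (le_max_right i j)).getElem hjj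
  rw [h1, outcome_def, List.getD_eq_getElem _ _ hjj, h2]

private lemma inputs_eq_ofFn (f : ℕ → ℕ) (hf : ∀ i, 0 < f i) (u : ℕ → List I)
    (hu : ∀ i, (u i).length = f i) (i : ℕ) :
    inputsUpTo u i
      = List.ofFn fun j : Fin (∑ k ∈ Finset.range (i + 1), f k) => outcomeI u j := by
  apply List.ext_getElem
  · rw [len_inputs f u hu, List.length_ofFn]
  · intro n h1 h2
    rw [getElem_inputs f hf u hu i n h1, List.getElem_ofFn]

private lemma inputs_from_seq (f : ℕ → ℕ) (α : ℕ → I) (i : ℕ) :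
    inputsUpTo (fun i => List.ofFn fun j : Fin (f i) => α ((∑ k ∈ Finset.range i, f k) + j)) i
      = List.ofFn fun j : Fin (∑ k ∈ Finset.range (i + 1), f k) => α j := by
  induction i with
  | zero => simp [inputsUpTo]; rfl
  | succ i ih =>
    rw [inputs_succ, ih,
      show (∑ k ∈ Finset.range (i + 1 + 1), f k)
          = (∑ k ∈ Finset.range (i + 1), f k) + f (i + 1) from Finset.sum_range_succ f (i + 1),
      List.ofFn_add]
    simp

private lemma outcome_from_seq (f : ℕ → ℕ) (hf : ∀ i, 0 < f i) (α : ℕ → I) :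
    outcomeI (fun i => List.ofFn fun j : Fin (f i) => α ((∑ k ∈ Finset.range i, f k) + j)) = α := by
  funext n
  rw [outcome_def, inputs_from_seq f α n]
  have hn : n < ∑ k ∈ Finset.range (n + 1), f k := S_ge f hf n
  rw [List.getD_eq_getElem _ _ (by simpa using hn), List.getElem_ofFn]

end Stmt8Aux

/-- Player O has a winning strategy in the delay game `Γ_f(L)` iff
she has one in the Gale-Stewart game `Γ(shift_f(L))`. -/
theorem stmt8 {I O : Type} [Fintype I] [Fintype O] [Inhabited I]
    (f : ℕ → ℕ) (hf : ∀ i, 0 < f i) (L : Set ((ℕ → I) × (ℕ → O))) :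
    (∃ σ : List I → O, delayWinO f L σ) ↔
      (∃ σ' : List I → Option O, gsWinO (shiftLang f L) σ') := by
  by_cases hO : Nonempty O
  case neg =>
    constructor
    · rintro ⟨σ, -⟩; exact absurd ⟨σ []⟩ hO
    · rintro ⟨σ', hw⟩
      obtain ⟨γ, -, -⟩ := hw (fun _ => default)
        (fun n => σ' (List.ofFn fun j : Fin (n + 1) => (fun _ => (default : I)) j))
        (fun i => rfl)
      exact absurd ⟨γ 0⟩ hO
  case pos =>
    have : Inhabited O := ⟨hO.some⟩
    constructor
    · rintro ⟨σ, hσ⟩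
      refine ⟨fun w =>
        if _ : ∃ i, (∑ j ∈ Finset.range (i + 1), f j) = w.length then some (σ w) else none, ?_⟩
      intro α β hβ
      obtain ⟨u, hu⟩ : ∃ u : ℕ → List I,
          u = fun i => List.ofFn fun j : Fin (f i) => α ((∑ k ∈ Finset.range i, f k) + j) :=
        ⟨_, rfl⟩
      have hlen : ∀ i, (u i).length = f i := by intro i; rw [hu]; simp
      have hmem := hσ u (fun i => σ (inputsUpTo u i)) hlen (fun i => rfl)
      have hout : outcomeI u = α := by rw [hu]; exact outcome_from_seq f hf α
      refine ⟨fun i => σ (inputsUpTo u i), by rw [hout] at hmem; exact hmem, ?_⟩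
      funext n
      show β n = _
      rw [hβ n]
      simp only [List.length_ofFn, shiftSeq]
      split
      · next h =>
        congr 1
        rw [hu, inputs_from_seq f α (Nat.find h), Nat.find_spec h]
      · rfl
    · rintro ⟨σ', hσ'⟩
      refine ⟨fun w => (σ' w).getD default, ?_⟩
      intro u v hlen hv
      obtain ⟨γ, hγL, hγ⟩ := hσ' (outcomeI u)
        (fun n => σ' (List.ofFn fun j : Fin (n + 1) => outcomeI u j)) (fun i => rfl)
      have hγL' : (outcomeI u, γ) ∈ L := hγL
      suffices hvγ : v = γ by rwa [hvγ]
      funext i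
      have hSge := S_ge f hf i
      set n := (∑ j ∈ Finset.range (i + 1), f j) - 1 with hn
      have hn1 : n + 1 = ∑ j ∈ Finset.range (i + 1), f j := by omega
      have hx : ∃ i', (∑ j ∈ Finset.range (i' + 1), f j) = n + 1 := ⟨i, hn1.symm⟩
      have hfind : Nat.find hx = i := by
        have hs := Nat.find_spec hx
        exact (S_strictMono f hf).injective (by rw [hs, hn1])
      have hβn : σ' (List.ofFn fun j : Fin (n + 1) => outcomeI u j) = shiftSeq f γ n :=
        congrFun hγ n
      have hsh : shiftSeq f γ n = some (γ i) := by
        rw [shiftSeq]; rw [dif_pos hx, hfind]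
      rw [hv i]
      have hin : inputsUpTo u i = List.ofFn fun j : Fin (n + 1) => outcomeI u j := by
        rw [inputs_eq_ofFn f hf u hlen i, ← hn1]
      show (σ' (inputsUpTo u i)).getD default = γ i
      rw [hin, hβn, hsh]
      rfl
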